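/- Let n and b be natural numbers with b even and b ≥ 2. Then the additive submonoid of ℕ generated by {b^(b^(n+i)) + 1 : i ∈ ℕ} equals the additive submonoid of ℕ generated by the two elements b^(b^n) + 1 and b^(b^(n+1)) + 1. -/

import Mathlib

theorem fermat_two_generators (n b : ℕ) (hb : 2 ≤ b) (hbe : Even b) :
    AddSubmonoid.closure {m : ℕ | ∃ i : ℕ, m = b ^ (b ^ (n + i)) + 1}
      = AddSubmonoid.closure {b ^ (b ^ n) + 1, b ^ (b ^ (n + 1)) + 1} := by
  have hb0 : 0 < b := by omega
  set A := b ^ (b ^ n) with hA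
  have hA1 : 1 ≤ A := Nat.one_le_pow _ _ hb0
  have hkey : ∀ i, b ^ (b ^ (n + i)) = A ^ (b ^ i) := by
    intro i
    rw [hA, ← pow_mul, ← pow_add]
  -- A + 1 divides A^2 - 1
  have h2 : (A + 1) ∣ A ^ 2 - 1 := by
    obtain ⟨A', hA'⟩ : ∃ A', A = A' + 1 := ⟨A - 1, by omega⟩
    rw [hA']
    exact ⟨A', by zify [Nat.one_le_pow 2 (A' + 1) (by omega)]; ring⟩
  -- A + 1 divides A^e - 1 for even e
  have hdvd : ∀ e, Even e → (A + 1) ∣ A ^ e - 1 := by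
    intro e ⟨k, hk⟩
    have : A ^ e - 1 = (A ^ 2) ^ k - 1 ^ k := by
      rw [one_pow, hk, ← two_mul, pow_mul]
    rw [this]
    exact h2.trans (Nat.sub_dvd_pow_sub_pow _ _ _)
  apply le_antisymm
  · rw [AddSubmonoid.closure_le]
    rintro m ⟨i, rfl⟩
    rcases Nat.eq_zero_or_pos i with hi | hi
    · subst hi
      exact AddSubmonoid.subset_closure (by simp [hA])
    · rw [hkey i]
      set e := b ^ i with he
      have heb : b ≤ e := by
        calc b = b ^ 1 := (pow_one b).symm
        _ ≤ b ^ i := Nat.pow_le_pow_right hb0 hi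
      have hee : Even e := hbe.pow_of_ne_zero (by omega)
      have heeb : Even (e - b) := (Nat.even_sub heb).mpr (by simp [hee, hbe])
      obtain ⟨x, hx⟩ := hdvd (e - b) heeb
      have hAe : 1 ≤ A ^ (e - b) := Nat.one_le_pow _ _ (by omega)
      have hx' : A ^ (e - b) = (A + 1) * x + 1 := by omega
      have hdecomp : A ^ e + 1 = (A ^ b * x) • (A + 1) + (A ^ b + 1) := by
        have : A ^ e = A ^ b * A ^ (e - b) := by
          rw [← pow_add]; congr 1; omega
        rw [this, hx', smul_eq_mul]; ring
      rw [hdecomp]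
      refine AddSubmonoid.add_mem _ ?_ ?_
      · exact nsmul_mem
          (AddSubmonoid.subset_closure (Set.mem_insert _ _)) _
      · rw [show A ^ b + 1 = b ^ b ^ (n + 1) + 1 by rw [hkey 1, pow_one]]
        exact AddSubmonoid.subset_closure (Set.mem_insert_iff.mpr (Or.inr rfl))
  · rw [AddSubmonoid.closure_le]
    rintro x (rfl | rfl)
    · exact AddSubmonoid.subset_closure ⟨0, by simp [hA]⟩
    · exact AddSubmonoid.subset_closure ⟨1, rfl⟩
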